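/- Any deterministic algorithm for the last zero problem wins on at most one instance along any monotone path in the conflict graph. -/

import Mathlib

/-- `r` is the (0-indexed) position of the last `0` (= `false`) of the string `s`. -/
def LastZeroAt (s : List Bool) (r : ℕ) : Prop :=
  s[r]? = some false ∧ ∀ j, r < j → j < s.length → s[j]? = some true

/-- Instances `s` and `t` (binary strings, each containing a `0`) are in conflict:
`t` is strictly longer, has the same number of `1`s, and agrees with `s` on all
positions up to (and including) the last `0` of `s`. -/
def Conflict (s t : List Bool) : Prop :=
  s.length < t.length ∧ s.count true = t.count true ∧
    ∃ r, LastZeroAt s r ∧ s.take (r + 1) = t.take (r + 1)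


lemma lastZero_lt_length {s : List Bool} {r : ℕ} (h : LastZeroAt s r) : r < s.length :=
  (List.getElem?_eq_some_iff.mp h.1).1

lemma lastZero_unique {s : List Bool} {r1 r2 : ℕ} (h1 : LastZeroAt s r1)
    (h2 : LastZeroAt s r2) : r1 = r2 := by
  rcases lt_trichotomy r1 r2 with h | h | h
  · have := h1.2 r2 h (lastZero_lt_length h2)
    rw [h2.1] at this; simp at this
  · exact h
  · have := h2.2 r1 h (lastZero_lt_length h1)
    rw [h1.1] at this; simp at this

lemma count_of_lastZero {s : List Bool} {r : ℕ} (h : LastZeroAt s r) :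
    s.count true = (s.take (r+1)).count true + (s.length - (r+1)) := by
  conv_lhs => rw [← List.take_append_drop (r+1) s]
  rw [List.count_append]
  congr 1
  have hall : (s.drop (r+1)).count true = (s.drop (r+1)).length := by
    rw [List.count_eq_length]
    intro b hb
    rcases List.mem_iff_getElem?.mp hb with ⟨n, hn⟩
    rw [List.getElem?_drop] at hn
    have hlt : r+1+n < s.length := (List.getElem?_eq_some_iff.mp hn).1
    have := h.2 (r+1+n) (by omega) hlt
    rw [this] at hn
    exact Option.some.inj hn
  rw [hall, List.length_drop]

lemma conflict_step {s t : List Bool} {r : ℕ} (h : Conflict s t) (hr : LastZeroAt s r) :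
    ∃ r', LastZeroAt t r' ∧ r < r' ∧ s.take (r+1) = t.take (r+1) := by
  obtain ⟨hlen, hcount, r0, hr0, htake⟩ := h
  have heq : r0 = r := lastZero_unique hr0 hr
  subst heq
  have hrlen : r0 < s.length := lastZero_lt_length hr
  have hrlenT : r0 < t.length := lt_trans hrlen hlen
  have htr : t[r0]? = some false := by
    have h1 := congrArg (fun (l : List Bool) => l[r0]?) htake
    simp only [List.getElem?_take_of_lt (Nat.lt_succ_self r0)] at h1
    rw [← h1]; exact hr.1
  set P := fun (j : ℕ) => t[j]? = some false with hP
  have hPr : P r0 := htr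
  have hspec : P (Nat.findGreatest P t.length) :=
    Nat.findGreatest_spec (le_of_lt hrlenT) hPr
  have hle : r0 ≤ Nat.findGreatest P t.length :=
    Nat.le_findGreatest (le_of_lt hrlenT) hPr
  set r' := Nat.findGreatest P t.length with hr'
  have hlz : LastZeroAt t r' := by
    refine ⟨hspec, fun j hj hjlen => ?_⟩
    have hnot : ¬ P j := Nat.findGreatest_is_greatest hj (le_of_lt hjlen)
    rcases List.getElem?_eq_getElem hjlen with hg
    cases hb : t[j]
    · exfalso; apply hnot; rw [hP]; simp only; rw [hg, hb]
    · rw [hg, hb]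
  have hne : r0 ≠ r' := by
    intro hcontra
    have hlzt : LastZeroAt t r0 := hcontra ▸ hlz
    have c1 := count_of_lastZero hr
    have c2 := count_of_lastZero hlzt
    rw [htake] at c1
    have htlen : r0 + 1 ≤ s.length := hrlen
    omega
  exact ⟨r', hlz, lt_of_le_of_ne hle hne, htake⟩

/-- A deterministic algorithm wins on `I` iff, knowing the number of ones, it stops
exactly at the last `0` of `I` and not earlier. -/
def WinsOn (A : ℕ → List Bool → Bool) (I : List Bool) : Prop :=
  ∃ r, LastZeroAt I r ∧ A (I.count true) (I.take (r + 1)) = true ∧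
    ∀ j, j < r → A (I.count true) (I.take (j + 1)) = false

/-- Along any monotone path in the conflict graph, a deterministic algorithm wins
on at most one instance. -/
theorem at_most_one_win_on_path (A : ℕ → List Bool → Bool) (q : ℕ) (J : ℕ → List Bool)
    (hlen : ∀ i ≤ q, (J i).length = (J 0).length + i)
    (hconf : ∀ i, i + 1 ≤ q → Conflict (J i) (J (i + 1))) :
    ∀ i j, i < j → j ≤ q → ¬(WinsOn A (J i) ∧ WinsOn A (J j)) := by
  rintro i j hij hjq ⟨⟨ri, hri, hstop, _⟩, ⟨rj, hrj, _, hbefore⟩⟩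
  have key : ∀ d, i + d ≤ q → ∃ rm, LastZeroAt (J (i+d)) rm ∧ (0 < d → ri < rm) ∧
      (J (i+d)).count true = (J i).count true ∧
      (J (i+d)).take (ri+1) = (J i).take (ri+1) := by
    intro d
    induction d with
    | zero => intro _; exact ⟨ri, hri, by omega, rfl, rfl⟩
    | succ d ih =>
      intro hle
      have hidx : i + (d+1) = i + d + 1 := by omega
      rw [hidx]
      obtain ⟨rm, hrm, hlt, hc, ht⟩ := ih (by omega)
      have hconf' := hconf (i+d) (by omega)
      obtain ⟨r', hlz', hr'gt, htake'⟩ := conflict_step hconf' hrm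
      have hrile : ri ≤ rm := by
        rcases Nat.eq_zero_or_pos d with h0 | h0
        · subst h0; exact le_of_eq (lastZero_unique hri hrm)
        · exact le_of_lt (hlt h0)
      have htake2 : (J (i+d+1)).take (ri+1) = (J i).take (ri+1) := by
        have h1 : (J (i+d)).take (ri+1) = (J (i+d+1)).take (ri+1) := by
          have := congrArg (fun l => l.take (ri+1)) htake'
          simpa [List.take_take, Nat.min_eq_left (by omega : ri+1 ≤ rm+1)]
            using this
        rw [← h1, ht]
      have hcount2 : (J (i+d+1)).count true = (J i).count true := by
        rw [← hconf'.2.1, hc]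
      exact ⟨r', hlz', fun _ => by omega, hcount2, htake2⟩
  obtain ⟨rm, hrm, hlt, hc, ht⟩ := key (j - i) (by omega)
  have hji : i + (j - i) = j := by omega
  rw [hji] at hrm hc ht
  have hrmj : rm = rj := lastZero_unique hrm hrj
  have := hbefore ri (by omega)
  rw [hc, ht, hstop] at this
  simp at this
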